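/- Let π, Π ∈ (0,1), K := O(π)/O(Π), and let S > 0 (risk impact) and s > 0 (data signal-to-noise). Define the averaged inferential drift μ := S·(π − Π)·(σ(Π)·s)² and volatility σ_D := S·σ(Π)²·s. Then the price-of-diffusion-risk satisfies μ/σ_D = (K^{1/2} − K^{−1/2})·σ(Π)·σ(π)·s, and equivalently μ = ((K^{1/2} − K^{−1/2})/S)·(σ(π)/σ(Π))·σ_D². (The paper's exact price-of-risk versus volatility relationship, whose expansion in K − 1 recovers the ubiquitous proportionality of drift to squared volatility.) -/

import Mathlib

/-- Odds of a probability `p`. -/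
noncomputable def odds (p : ℝ) : ℝ := p / (1 - p)

/-- Belief volatility of a probability `p`. -/
noncomputable def beliefVol (p : ℝ) : ℝ := Real.sqrt (p * (1 - p))

/-- The paper's exact price-of-risk versus volatility relationship: with
`K = odds π / odds P`, averaged inferential drift `μ = S(π − P)(σ(P)s)²` and
volatility `σ_D = S σ(P)² s`, one has
`μ/σ_D = (K^{1/2} − K^{−1/2})·σ(P)·σ(π)·s` and
`μ = ((K^{1/2} − K^{−1/2})/S)·(σ(π)/σ(P))·σ_D²`. -/
theorem price_of_risk_vs_volatility (π P : ℝ) (hπ : π ∈ Set.Ioo (0:ℝ) 1)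
    (hP : P ∈ Set.Ioo (0:ℝ) 1) (K : ℝ) (hK : K = odds π / odds P)
    (S s : ℝ) (hS : 0 < S) (hs : 0 < s)
    (μ σD : ℝ) (hμ : μ = S * (π - P) * (beliefVol P * s)^2)
    (hσD : σD = S * (beliefVol P)^2 * s) :
    μ / σD = (Real.sqrt K - Real.sqrt K⁻¹) * beliefVol P * beliefVol π * s ∧
    μ = ((Real.sqrt K - Real.sqrt K⁻¹) / S) * (beliefVol π / beliefVol P) * σD^2 := by
  obtain ⟨hπ0, hπ1⟩ := hπ
  obtain ⟨hP0, hP1⟩ := hP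
  have h1π : 0 < 1 - π := by linarith
  have h1P : 0 < 1 - P := by linarith
  have ha : 0 < π * (1 - P) := mul_pos hπ0 h1P
  have hb : 0 < P * (1 - π) := mul_pos hP0 h1π
  have hKval : K = (π * (1 - P)) / (P * (1 - π)) := by
    rw [hK, odds, odds]
    field_simp
  have hsa : Real.sqrt (π * (1 - P)) ≠ 0 := ne_of_gt (Real.sqrt_pos.mpr ha)
  have hsb : Real.sqrt (P * (1 - π)) ≠ 0 := ne_of_gt (Real.sqrt_pos.mpr hb)
  have hsqK : Real.sqrt K = Real.sqrt (π * (1 - P)) / Real.sqrt (P * (1 - π)) := by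
    rw [hKval, Real.sqrt_div ha.le]
  have hsqKi : Real.sqrt K⁻¹ = Real.sqrt (P * (1 - π)) / Real.sqrt (π * (1 - P)) := by
    rw [hKval, inv_div, Real.sqrt_div hb.le]
  have hvolP : beliefVol P ≠ 0 :=
    ne_of_gt (Real.sqrt_pos.mpr (mul_pos hP0 h1P))
  have hvolπ : beliefVol π ≠ 0 :=
    ne_of_gt (Real.sqrt_pos.mpr (mul_pos hπ0 h1π)) 
  have hprod : beliefVol P * beliefVol π
      = Real.sqrt (π * (1 - P)) * Real.sqrt (P * (1 - π)) := by
    rw [beliefVol, beliefVol, ← Real.sqrt_mul (by positivity), ← Real.sqrt_mul ha.le]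
    ring_nf
  have hkey : (Real.sqrt K - Real.sqrt K⁻¹) * beliefVol P * beliefVol π = π - P := by
    have hx : Real.sqrt (π * (1 - P)) * Real.sqrt (π * (1 - P)) = π * (1 - P) :=
      Real.mul_self_sqrt ha.le
    have hy : Real.sqrt (P * (1 - π)) * Real.sqrt (P * (1 - π)) = P * (1 - π) :=
      Real.mul_self_sqrt hb.le
    rw [hsqK, hsqKi, mul_assoc, hprod]
    set x := Real.sqrt (π * (1 - P)) with hxd
    set y := Real.sqrt (P * (1 - π)) with hyd
    field_simp
    linear_combination hx - hy
  have hd : Real.sqrt K - Real.sqrt K⁻¹ = (π - P) / (beliefVol P * beliefVol π) := by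
    rw [eq_div_iff (mul_ne_zero hvolP hvolπ)]
    linear_combination hkey
  have hσD0 : σD ≠ 0 := by
    rw [hσD]; positivity
  constructor
  · rw [div_eq_iff hσD0, hd, hμ, hσD]
    field_simp
  · rw [hd, hμ, hσD]
    field_simp
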